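/- Let α ∈ (0,1) and B, R_0, N_m, N_f > 0 and λ_S > λ_U > 0. The function F(B_M, B_S, B_U) = N_m·u(B_M·R_0/N_m) + N_f·u((λ_S·B_S + λ_U·B_U)·R_0/N_f), maximized over B_M, B_S, B_U ≥ 0 with B_M + B_S + B_U = B, has the unique maximizer B_U = 0, B_M = N_m·B/(N_m + μ_S·N_f), B_S = μ_S·N_f·B/(N_m + μ_S·N_f), where μ_S = λ_S^{1/α − 1}. -/

import Mathlib

open Real

/-- Tangent line inequality for the strictly concave function `t ↦ t ^ p`, strict version. -/
lemma tangent_lt {p t c : ℝ} (hp0 : 0 < p) (hp1 : p < 1) (ht : 0 ≤ t) (hc : 0 < c)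
    (hne : t ≠ c) : t ^ p < c ^ p + p * c ^ (p - 1) * (t - c) := by
  have hcp : (0:ℝ) < c ^ p := Real.rpow_pos_of_pos hc p
  have hc0 : c ≠ 0 := hc.ne'
  have hs : -1 ≤ t / c - 1 := by
    have : 0 ≤ t / c := div_nonneg ht hc.le
    linarith
  have hs' : t / c - 1 ≠ 0 := by
    intro h
    apply hne
    have h1 : t / c = 1 := by linarith
    field_simp at h1
    linarith
  have hber := rpow_one_add_lt_one_add_mul_self hs hs' hp0 hp1
  rw [show 1 + (t / c - 1) = t / c by ring] at hber
  have h2 : (t / c) ^ p = t ^ p / c ^ p := Real.div_rpow ht hc.le p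
  rw [h2, div_lt_iff₀ hcp] at hber
  have h3 : c ^ (p - 1) = c ^ p / c := by
    rw [Real.rpow_sub hc, Real.rpow_one]
  rw [h3]
  calc t ^ p < (1 + p * (t / c - 1)) * c ^ p := hber
    _ = c ^ p + p * (c ^ p / c) * (t - c) := by field_simp

/-- Tangent line inequality for `t ↦ t ^ p`, non-strict version. -/
lemma tangent_le {p t c : ℝ} (hp0 : 0 < p) (hp1 : p < 1) (ht : 0 ≤ t) (hc : 0 < c) :
    t ^ p ≤ c ^ p + p * c ^ (p - 1) * (t - c) := by
  by_cases hne : t = c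
  · subst hne; simp
  · exact (tangent_lt hp0 hp1 ht hc hne).le

/-- Algebraic identity: the linear (tangent) terms sum to a nonpositive multiple of `cU`. -/
lemma alg_ident (K R_0 N_m N_f lamS lamU cM cS cU m s B : ℝ)
    (hNm : N_m ≠ 0) (hNf : N_f ≠ 0) (hlamS : lamS ≠ 0)
    (hsum : cM + cS + cU = B) (hms : m + s = B) :
    N_m * (K * (cM * R_0 / N_m - m * R_0 / N_m))
      + N_f * (K / lamS *
          ((lamS * cS + lamU * cU) * R_0 / N_f - (lamS * s + lamU * 0) * R_0 / N_f))
    = -(K * R_0 * ((lamS - lamU) * cU) / lamS) := by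
  obtain rfl : s = cM + cS + cU - m := by linarith
  field_simp
  ring

set_option maxHeartbeats 1000000 in
/-- Key lemma: any feasible allocation is either the claimed optimum or strictly worse. -/
lemma key_lemma (α B R_0 N_m N_f lamS lamU : ℝ)
    (hα0 : 0 < α) (hα1 : α < 1)
    (hB : 0 < B) (hR0 : 0 < R_0) (hNm : 0 < N_m) (hNf : 0 < N_f)
    (hlamU : 0 < lamU) (hlam : lamU < lamS)
    (cM cS cU : ℝ) (hcM : 0 ≤ cM) (hcS : 0 ≤ cS) (hcU : 0 ≤ cU)
    (hsum : cM + cS + cU = B) :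
    (cM = N_m * B / (N_m + lamS ^ (1 / α - 1) * N_f) ∧
     cS = lamS ^ (1 / α - 1) * N_f * B / (N_m + lamS ^ (1 / α - 1) * N_f) ∧ cU = 0) ∨
    N_m * ((cM * R_0 / N_m) ^ (1 - α) / (1 - α))
        + N_f * (((lamS * cS + lamU * cU) * R_0 / N_f) ^ (1 - α) / (1 - α))
      < N_m * ((N_m * B / (N_m + lamS ^ (1 / α - 1) * N_f) * R_0 / N_m) ^ (1 - α) / (1 - α))
        + N_f * (((lamS * (lamS ^ (1 / α - 1) * N_f * B / (N_m + lamS ^ (1 / α - 1) * N_f))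
              + lamU * 0) * R_0 / N_f) ^ (1 - α) / (1 - α)) := by
  have hlamS : 0 < lamS := hlamU.trans hlam
  have hα0' : α ≠ 0 := hα0.ne'
  set μ := lamS ^ (1 / α - 1) with hμdef
  have hμ : 0 < μ := Real.rpow_pos_of_pos hlamS _
  set D := N_m + μ * N_f with hDdef
  have hD : 0 < D := by positivity
  set m := N_m * B / D with hmdef
  set s := μ * N_f * B / D with hsdef
  have hm : 0 < m := by rw [hmdef]; positivity
  have hs : 0 < s := by rw [hsdef]; positivity
  have hms : m + s = B := by
    rw [hmdef, hsdef]
    field_simp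
    ring
  set p := 1 - α with hpdef
  have hp0 : 0 < p := by rw [hpdef]; linarith
  have hp1 : p < 1 := by rw [hpdef]; linarith
  clear_value μ D
  by_cases heq : cM = m ∧ cS = s ∧ cU = 0
  · exact Or.inl heq
  right
  have hx : 0 ≤ cM * R_0 / N_m := div_nonneg (mul_nonneg hcM hR0.le) hNm.le
  have hy : 0 ≤ (lamS * cS + lamU * cU) * R_0 / N_f :=
    div_nonneg (mul_nonneg (add_nonneg (mul_nonneg hlamS.le hcS)
      (mul_nonneg hlamU.le hcU)) hR0.le) hNf.le
  have hc1 : 0 < m * R_0 / N_m := div_pos (mul_pos hm hR0) hNm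
  have hc2eq : (lamS * s + lamU * 0) * R_0 / N_f = lamS * μ * (m * R_0 / N_m) := by
    rw [hmdef, hsdef]
    field_simp
    ring
  clear_value m s
  have hc2 : 0 < (lamS * s + lamU * 0) * R_0 / N_f := by
    rw [hc2eq]; exact mul_pos (mul_pos hlamS hμ) hc1
  have hident : ((lamS * s + lamU * 0) * R_0 / N_f) ^ (p - 1)
      = (m * R_0 / N_m) ^ (p - 1) / lamS := by
    rw [hc2eq, Real.mul_rpow (mul_pos hlamS hμ).le hc1.le]
    have h1 : lamS * μ = lamS ^ (1 / α) := by
      nth_rewrite 1 [← Real.rpow_one lamS]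
      rw [hμdef, ← Real.rpow_add hlamS, show (1 : ℝ) + (1 / α - 1) = 1 / α by ring]
    rw [h1, ← Real.rpow_mul hlamS.le,
      show (1 / α) * (p - 1) = (-1 : ℝ) by rw [hpdef]; field_simp; ring,
      Real.rpow_neg_one, inv_mul_eq_div]
  set K := (m * R_0 / N_m) ^ (p - 1) with hKdef
  have hK : 0 < K := Real.rpow_pos_of_pos hc1 _
  clear_value p K
  have hLsum := alg_ident K R_0 N_m N_f lamS lamU cM cS cU m s B hNm.ne' hNf.ne'
    hlamS.ne' hsum hms
  have hT2 : ((lamS * cS + lamU * cU) * R_0 / N_f) ^ p / p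
      ≤ ((lamS * s + lamU * 0) * R_0 / N_f) ^ p / p
        + K / lamS *
          ((lamS * cS + lamU * cU) * R_0 / N_f - (lamS * s + lamU * 0) * R_0 / N_f) := by
    have h := tangent_le hp0 hp1 hy hc2
    rw [hident] at h
    have e : (((lamS * s + lamU * 0) * R_0 / N_f) ^ p
          + p * (K / lamS) *
            ((lamS * cS + lamU * cU) * R_0 / N_f - (lamS * s + lamU * 0) * R_0 / N_f)) / p
        = ((lamS * s + lamU * 0) * R_0 / N_f) ^ p / p
          + K / lamS *
            ((lamS * cS + lamU * cU) * R_0 / N_f - (lamS * s + lamU * 0) * R_0 / N_f) := by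
      field_simp
    rw [← e]
    gcongr
  have hT1 : (cM * R_0 / N_m) ^ p / p
      ≤ (m * R_0 / N_m) ^ p / p + K * (cM * R_0 / N_m - m * R_0 / N_m) := by
    have h := tangent_le hp0 hp1 hx hc1
    rw [← hKdef] at h
    have e : ((m * R_0 / N_m) ^ p + p * K * (cM * R_0 / N_m - m * R_0 / N_m)) / p
        = (m * R_0 / N_m) ^ p / p + K * (cM * R_0 / N_m - m * R_0 / N_m) := by
      field_simp
    rw [← e]
    gcongr
  have hcoefnn : 0 ≤ K * R_0 * ((lamS - lamU) * cU) / lamS :=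
    div_nonneg (mul_nonneg (mul_nonneg hK.le hR0.le)
      (mul_nonneg (by linarith) hcU)) hlamS.le
  -- we need strictness in at least one place
  by_cases hM : cM = m
  · by_cases hU : cU = 0
    · -- then cS ≠ s, strict in hT2
      have hSne : cS ≠ s := fun h => heq ⟨hM, h, hU⟩
      have hyne : (lamS * cS + lamU * cU) * R_0 / N_f
          ≠ (lamS * s + lamU * 0) * R_0 / N_f := by
        intro h
        apply hSne
        have h1 : ((lamS * cS + lamU * cU) * R_0 / N_f) * N_f
            = ((lamS * s + lamU * 0) * R_0 / N_f) * N_f := by rw [h]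
        rw [div_mul_cancel₀ _ hNf.ne', div_mul_cancel₀ _ hNf.ne'] at h1
        have h2 : lamS * cS + lamU * cU = lamS * s + lamU * 0 :=
          mul_right_cancel₀ hR0.ne' h1
        have h3 : lamS * cS = lamS * s := by rw [hU] at h2; linarith
        exact mul_left_cancel₀ hlamS.ne' h3
      have hT2' : ((lamS * cS + lamU * cU) * R_0 / N_f) ^ p / p
          < ((lamS * s + lamU * 0) * R_0 / N_f) ^ p / p
            + K / lamS *
              ((lamS * cS + lamU * cU) * R_0 / N_f - (lamS * s + lamU * 0) * R_0 / N_f) := by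
        have h := tangent_lt hp0 hp1 hy hc2 hyne
        rw [hident] at h
        have e : (((lamS * s + lamU * 0) * R_0 / N_f) ^ p
              + p * (K / lamS) *
                ((lamS * cS + lamU * cU) * R_0 / N_f - (lamS * s + lamU * 0) * R_0 / N_f)) / p
            = ((lamS * s + lamU * 0) * R_0 / N_f) ^ p / p
              + K / lamS *
                ((lamS * cS + lamU * cU) * R_0 / N_f - (lamS * s + lamU * 0) * R_0 / N_f) := by
          field_simp
        rw [← e]
        gcongr
      have k1 := mul_le_mul_of_nonneg_left hT1 hNm.le
      have k2 := mul_lt_mul_of_pos_left hT2' hNf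
      linarith [k1, k2, hLsum, hcoefnn]
    · -- cU > 0, strict drop in hLsum
      have hU' : 0 < cU := lt_of_le_of_ne hcU (Ne.symm hU)
      have hcoefpos : 0 < K * R_0 * ((lamS - lamU) * cU) / lamS :=
        div_pos (mul_pos (mul_pos hK hR0) (mul_pos (by linarith) hU')) hlamS
      have k1 := mul_le_mul_of_nonneg_left hT1 hNm.le
      have k2 := mul_le_mul_of_nonneg_left hT2 hNf.le
      linarith [k1, k2, hLsum, hcoefpos]
  · -- cM ≠ m, strict in hT1
    have hxne : cM * R_0 / N_m ≠ m * R_0 / N_m := by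
      intro h
      apply hM
      have h1 : (cM * R_0 / N_m) * N_m = (m * R_0 / N_m) * N_m := by rw [h]
      rw [div_mul_cancel₀ _ hNm.ne', div_mul_cancel₀ _ hNm.ne'] at h1
      exact mul_right_cancel₀ hR0.ne' h1
    have hT1' : (cM * R_0 / N_m) ^ p / p
        < (m * R_0 / N_m) ^ p / p + K * (cM * R_0 / N_m - m * R_0 / N_m) := by
      have h := tangent_lt hp0 hp1 hx hc1 hxne
      rw [← hKdef] at h
      have e : ((m * R_0 / N_m) ^ p + p * K * (cM * R_0 / N_m - m * R_0 / N_m)) / p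
          = (m * R_0 / N_m) ^ p / p + K * (cM * R_0 / N_m - m * R_0 / N_m) := by
        field_simp
      rw [← e]
      gcongr
    have k1 := mul_lt_mul_of_pos_left hT1' hNm
    have k2 := mul_le_mul_of_nonneg_left hT2 hNf.le
    linarith [k1, k2, hLsum, hcoefnn]

/-- when `λ_S > λ_U`, the social-planner welfare
`F(B_M, B_S, B_U) = N_m·u(B_M·R_0/N_m) + N_f·u((λ_S·B_S + λ_U·B_U)·R_0/N_f)`,
maximized over nonnegative allocations summing to `B`, has the unique maximizer
`B_U = 0`, `B_M = N_m·B/(N_m + μ_S·N_f)`, `B_S = μ_S·N_f·B/(N_m + μ_S·N_f)`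
with `μ_S = λ_S^(1/α − 1)`. -/
theorem stmt17 (α B R_0 N_m N_f lamS lamU : ℝ)
    (hα0 : 0 < α) (hα1 : α < 1)
    (hB : 0 < B) (hR0 : 0 < R_0) (hNm : 0 < N_m) (hNf : 0 < N_f)
    (hlamU : 0 < lamU) (hlam : lamU < lamS) :
    ∀ bM bS bU : ℝ,
      (0 ≤ bM ∧ 0 ≤ bS ∧ 0 ≤ bU ∧ bM + bS + bU = B ∧
        ∀ cM cS cU : ℝ, 0 ≤ cM → 0 ≤ cS → 0 ≤ cU → cM + cS + cU = B →
          N_m * ((cM * R_0 / N_m) ^ (1 - α) / (1 - α))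
              + N_f * (((lamS * cS + lamU * cU) * R_0 / N_f) ^ (1 - α) / (1 - α))
            ≤ N_m * ((bM * R_0 / N_m) ^ (1 - α) / (1 - α))
              + N_f * (((lamS * bS + lamU * bU) * R_0 / N_f) ^ (1 - α) / (1 - α)))
      ↔ (bM = N_m * B / (N_m + lamS ^ (1 / α - 1) * N_f) ∧
         bS = lamS ^ (1 / α - 1) * N_f * B / (N_m + lamS ^ (1 / α - 1) * N_f) ∧
         bU = 0) := by
  have hlamS : 0 < lamS := hlamU.trans hlam
  have hμ : 0 < lamS ^ (1 / α - 1) := Real.rpow_pos_of_pos hlamS _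
  have hD : 0 < N_m + lamS ^ (1 / α - 1) * N_f := by positivity
  have h0m : 0 ≤ N_m * B / (N_m + lamS ^ (1 / α - 1) * N_f) := by positivity
  have h0s : 0 ≤ lamS ^ (1 / α - 1) * N_f * B / (N_m + lamS ^ (1 / α - 1) * N_f) := by
    positivity
  have hsum' : N_m * B / (N_m + lamS ^ (1 / α - 1) * N_f)
      + lamS ^ (1 / α - 1) * N_f * B / (N_m + lamS ^ (1 / α - 1) * N_f) + 0 = B := by
    field_simp
    ring
  intro bM bS bU
  constructor
  · rintro ⟨hbM, hbS, hbU, hsum, hmax⟩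
    rcases key_lemma α B R_0 N_m N_f lamS lamU hα0 hα1 hB hR0 hNm hNf hlamU hlam
      bM bS bU hbM hbS hbU hsum with h | h
    · exact h
    · exfalso
      have hmax' := hmax _ _ _ h0m h0s le_rfl hsum'
      linarith
  · rintro ⟨h1, h2, h3⟩
    subst h1; subst h2; subst h3
    refine ⟨h0m, h0s, le_rfl, hsum', ?_⟩
    intro cM cS cU hcM hcS hcU hcsum
    rcases key_lemma α B R_0 N_m N_f lamS lamU hα0 hα1 hB hR0 hNm hNf hlamU hlam
      cM cS cU hcM hcS hcU hcsum with h | h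
    · obtain ⟨e1, e2, e3⟩ := h
      subst e1; subst e2; subst e3
      exact le_rfl
    · exact h.le
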